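/- Let b(n) denote the number of hyperbinary expansions of n, with b(0)=1. Then b(1)=1, b(2n+1)=b(n), and b(2n)=b(n)+b(n-1) for all n ≥ 1. -/

import Mathlib

/-- The integer represented by a word of digits (most significant first). -/
def hval (w : List ℕ) : ℕ := w.foldl (fun a d => 2 * a + d) 0

/-- `w` is a hyperbinary expansion of `n`: digits in {0,1,2}, nonzero leading
digit, representing `n`.  (The empty word is the unique expansion of `0`.) -/
def IsHyp (n : ℕ) (w : List ℕ) : Prop :=
  (∀ d ∈ w, d ≤ 2) ∧ w.head? ≠ some 0 ∧ hval w = n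

/-- `b n`: the number of hyperbinary expansions of `n` (so `b 0 = 1`). -/
noncomputable def hb (n : ℕ) : ℕ := Set.ncard {w : List ℕ | IsHyp n w}

/-- A single rewriting step: `02 → 10` or `12 → 20`, a leading `2` treated as `02`. -/
def Step (u v : List ℕ) : Prop :=
  (∃ x y : List ℕ, u = x ++ [0, 2] ++ y ∧ v = x ++ [1, 0] ++ y) ∨
  (∃ x y : List ℕ, u = x ++ [1, 2] ++ y ∧ v = x ++ [2, 0] ++ y) ∨
  (∃ y : List ℕ, u = 2 :: y ∧ v = 1 :: 0 :: y)

/-- Strict shortlex order: first by length, then lexicographically. -/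
def Shortlex (u v : List ℕ) : Prop :=
  u.length < v.length ∨ (u.length = v.length ∧ List.Lex (· < ·) u v)

/-- Number of maximal blocks of consecutive `2`'s in a word. -/
def blocks2 : List ℕ → ℕ
  | [] => 0
  | d :: rest => blocks2 rest + (if d = 2 ∧ rest.head? ≠ some 2 then 1 else 0)

lemma hval_concat (w : List ℕ) (d : ℕ) : hval (w ++ [d]) = 2 * hval w + d := by
  simp [hval, List.foldl_append]

lemma hval_shift : ∀ (t : List ℕ) (a : ℕ),
    t.foldl (fun a d => 2 * a + d) a = 2 ^ t.length * a + hval t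
  | [], a => by simp [hval]
  | d :: t, a => by
      have h1 := hval_shift t (2 * a + d)
      have h2 := hval_shift t d
      have h3 : hval (d :: t) = t.foldl (fun a d => 2 * a + d) d := by simp [hval]
      simp only [List.foldl_cons, List.length_cons]
      rw [h1, h3, h2]; ring

lemma hval_cons (d : ℕ) (t : List ℕ) : hval (d :: t) = 2 ^ t.length * d + hval t := by
  have h3 : hval (d :: t) = t.foldl (fun a d => 2 * a + d) d := by simp [hval]
  rw [h3, hval_shift]

lemma isHyp_concat {n : ℕ} {w : List ℕ} (d : ℕ) (hd : d ≤ 2)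
    (h : IsHyp n w) (hne : w ≠ [] ∨ d ≠ 0) : IsHyp (2 * n + d) (w ++ [d]) := by
  obtain ⟨hdig, hhead, hv⟩ := h
  refine ⟨?_, ?_, by rw [hval_concat, hv]⟩
  · intro e he
    rcases List.mem_append.1 he with h1 | h1
    · exact hdig e h1
    · simp at h1; omega
  · rw [List.head?_append]
    cases w with
    | nil => simp; rcases hne with h1 | h1 <;> simp_all
    | cons a t => simpa using hhead

lemma isHyp_decomp {n : ℕ} (hn : n ≠ 0) {w : List ℕ} (h : IsHyp n w) :
    ∃ u d, w = u ++ [d] ∧ d ≤ 2 ∧ 2 * hval u + d = n ∧ IsHyp (hval u) u := by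
  obtain ⟨hdig, hhead, hv⟩ := h
  rcases List.eq_nil_or_concat w with rfl | ⟨u, d, rfl⟩
  · exact absurd hv (by simp [hval]; omega)
  rw [List.concat_eq_append] at *
  refine ⟨u, d, rfl, hdig d (by simp), by rw [← hval_concat, hv], ?_, ?_, rfl⟩
  · exact fun e he => hdig e (List.mem_append.2 (Or.inl he))
  · rw [List.head?_append] at hhead
    cases u with
    | nil => simp
    | cons a t => simpa using hhead

lemma isHyp_length {n : ℕ} {w : List ℕ} (h : IsHyp n w) : w.length ≤ n := by
  obtain ⟨hdig, hhead, hv⟩ := h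
  cases w with
  | nil => simp
  | cons d t =>
    rw [hval_cons] at hv
    have hd : d ≠ 0 := by simpa using hhead
    have h1 : t.length < 2 ^ t.length := Nat.lt_two_pow_self
    have h2 : 2 ^ t.length * 1 ≤ 2 ^ t.length * d := Nat.mul_le_mul_left _ (by omega)
    simp only [List.length_cons]
    omega

lemma finiteHyp (n : ℕ) : {w : List ℕ | IsHyp n w}.Finite := by
  apply Set.Finite.subset ((List.finite_length_le (Fin 3) n).image (List.map Fin.val))
  intro w hw
  refine ⟨w.map (fun d => (⟨min d 2, by omega⟩ : Fin 3)), by simpa using isHyp_length hw, ?_⟩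
  rw [List.map_map]
  have : ∀ x ∈ w, (Fin.val ∘ fun d => (⟨min d 2, by omega⟩ : Fin 3)) x = id x := by
    intro x hx
    have := hw.1 x hx
    simp; omega
  rw [List.map_congr_left this, List.map_id]

lemma hb_zero : hb 0 = 1 := by
  have : {w : List ℕ | IsHyp 0 w} = {[]} := by
    ext w
    constructor
    · intro hw
      cases w with
      | nil => rfl
      | cons d t =>
        obtain ⟨hdig, hhead, hv⟩ := hw
        rw [hval_cons] at hv
        have hd : d ≠ 0 := by simpa using hhead
        have : 0 < 2 ^ t.length := Nat.pow_pos (by norm_num)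
        have h2 : 2 ^ t.length * 1 ≤ 2 ^ t.length * d := Nat.mul_le_mul_left _ (by omega)
        omega
    · rintro rfl
      exact ⟨by simp, by simp, by simp [hval]⟩
  rw [hb, this, Set.ncard_singleton]

lemma hb_odd (n : ℕ) : hb (2 * n + 1) = hb n := by
  have hset : {w : List ℕ | IsHyp (2 * n + 1) w}
      = (fun u => u ++ [1]) '' {w : List ℕ | IsHyp n w} := by
    ext w
    constructor
    · intro hw
      obtain ⟨u, d, rfl, hd, hsum, hu⟩ := isHyp_decomp (by omega) hw
      have hd1 : d = 1 := by omega
      have hn : hval u = n := by omega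
      exact ⟨u, by rwa [hn] at hu, by rw [hd1]⟩
    · rintro ⟨u, hu, rfl⟩
      exact isHyp_concat 1 (by norm_num) hu (Or.inr (by norm_num))
  rw [hb, hb, hset, Set.ncard_image_of_injective _ (List.append_left_injective [1])]

lemma hb_even (n : ℕ) (hn : 1 ≤ n) : hb (2 * n) = hb n + hb (n - 1) := by
  have hset : {w : List ℕ | IsHyp (2 * n) w}
      = (fun u => u ++ [0]) '' {w : List ℕ | IsHyp n w}
        ∪ (fun u => u ++ [2]) '' {w : List ℕ | IsHyp (n - 1) w} := by
    ext w
    constructor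
    · intro hw
      obtain ⟨u, d, rfl, hd, hsum, hu⟩ := isHyp_decomp (by omega) hw
      rcases (show d = 0 ∨ d = 2 by omega) with rfl | rfl
      · exact Or.inl ⟨u, by rwa [show hval u = n by omega] at hu, rfl⟩
      · exact Or.inr ⟨u, by rwa [show hval u = n - 1 by omega] at hu, rfl⟩
    · rintro (⟨u, hu, rfl⟩ | ⟨u, hu, rfl⟩)
      · have hune : u ≠ [] := by
          rintro rfl
          have := hu.2.2
          simp [hval] at this
          omega
        have := isHyp_concat 0 (by norm_num) hu (Or.inl hune)
        simpa using this
      · have := isHyp_concat 2 (by norm_num) hu (Or.inr (by norm_num))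
        rwa [show 2 * (n - 1) + 2 = 2 * n by omega] at this
  have hdisj : Disjoint ((fun u => u ++ [0]) '' {w : List ℕ | IsHyp n w})
      ((fun u => u ++ [2]) '' {w : List ℕ | IsHyp (n - 1) w}) := by
    rw [Set.disjoint_left]
    rintro x ⟨u, _, rfl⟩ ⟨v, _, hv⟩
    have := congrArg List.getLast? hv
    rw [List.getLast?_concat, List.getLast?_concat] at this
    simp at this
  rw [hb, hb, hb, hset,
    Set.ncard_union_eq hdisj ((finiteHyp n).image _) ((finiteHyp (n - 1)).image _),
    Set.ncard_image_of_injective _ (List.append_left_injective [0]),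
    Set.ncard_image_of_injective _ (List.append_left_injective [2])]

theorem stmt1 :
    hb 1 = 1 ∧ ∀ n : ℕ, 1 ≤ n →
      hb (2 * n + 1) = hb n ∧ hb (2 * n) = hb n + hb (n - 1) := by
  constructor
  · have := hb_odd 0
    simpa [hb_zero] using this
  · exact fun n hn => ⟨hb_odd n, hb_even n hn⟩
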